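/- If R is a right quasi-duo ring, then every right primitive quotient of R is a division ring; that is, for every right primitive ideal P of R, the ring R/P is a division ring. -/

import Mathlib

/-- A ring is right quasi-duo if every maximal right ideal (a coatom in the
lattice of right ideals, i.e. submodules of `R` over `Rᵐᵒᵖ`) is two-sided. -/
def RightQuasiDuo (R : Type*) [Ring R] : Prop :=
  ∀ I : Submodule Rᵐᵒᵖ R, IsCoatom I → ∀ r x : R, x ∈ I → r * x ∈ I

/-- A ring is left quasi-duo if every maximal left ideal is two-sided. -/
def LeftQuasiDuo (R : Type*) [Ring R] : Prop :=
  ∀ I : Submodule R R, IsCoatom I → ∀ r x : R, x ∈ I → x * r ∈ I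

theorem stmt3 (R : Type*) [Ring R] (h : RightQuasiDuo R)
    (P : TwoSidedIdeal R) (M : Type*) [AddCommGroup M] [Module Rᵐᵒᵖ M]
    [IsSimpleModule Rᵐᵒᵖ M]
    (hP : ∀ r : R, r ∈ P ↔ ∀ m : M, MulOpposite.op r • m = 0) :
    Nontrivial P.ringCon.Quotient ∧
      ∀ x : P.ringCon.Quotient, x ≠ 0 → IsUnit x := by
  classical
  open MulOpposite in
  have : Nontrivial M := IsSimpleModule.nontrivial Rᵐᵒᵖ M
  -- pick a nonzero element of the simple module
  obtain ⟨m, hm⟩ := exists_ne (0 : M)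
  -- the linear map `r ↦ op r • m`
  set φ : R →ₗ[Rᵐᵒᵖ] M :=
    { toFun := fun r => op r • m
      map_add' := by intro x y; simp [add_smul]
      map_smul' := by
        intro a x
        simp only [RingHom.id_apply]
        rw [MulOpposite.smul_eq_mul_unop, op_mul, op_unop, mul_smul] } with hφ
  have hφ1 : φ 1 = m := by simp [hφ]
  -- φ is surjective
  have hsurj : Function.Surjective φ := by
    have hrange : LinearMap.range φ = ⊤ := by
      rcases eq_bot_or_eq_top (LinearMap.range φ) with hb | ht
      · exfalso
        have : m ∈ LinearMap.range φ := ⟨1, hφ1⟩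
        rw [hb] at this
        exact hm (by simpa using this)
      · exact ht
    exact LinearMap.range_eq_top.mp hrange
  set I : Submodule Rᵐᵒᵖ R := LinearMap.ker φ with hI
  -- I is a maximal right ideal
  have hsimple : IsSimpleModule Rᵐᵒᵖ (R ⧸ I) :=
    IsSimpleModule.congr (LinearMap.quotKerEquivOfSurjective φ hsurj)
  have hco : IsCoatom I := isSimpleModule_iff_isCoatom.mp hsimple
  have htwo : ∀ r x : R, x ∈ I → r * x ∈ I := h I hco
  -- P = I
  have hPI : ∀ x : R, x ∈ P ↔ x ∈ I := by
    intro x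
    constructor
    · intro hx
      simpa [hI, LinearMap.mem_ker, hφ] using (hP x).mp hx m
    · intro hx
      rw [hP]
      intro m'
      obtain ⟨r, rfl⟩ := hsurj m'
      have hrx : r * x ∈ I := htwo r x hx
      have : op x • φ r = φ (r * x) := by
        simp only [hφ, LinearMap.coe_mk, AddHom.coe_mk, ← mul_smul, ← op_mul]
      rw [this]
      simpa [hI, LinearMap.mem_ker] using hrx
  -- translate membership in quotient
  have hmemP : ∀ a b : R, ((a : P.ringCon.Quotient) = b) ↔ a - b ∈ P := by
    intro a b
    rw [RingCon.eq, P.rel_iff]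
  -- nontriviality
  have hone : (1 : R) ∉ P := by
    rw [hPI]
    intro h1
    exact hco.1 (eq_top_iff.mpr fun y _ => by
      have : (y : R) * 1 ∈ I := htwo y 1 h1
      simpa using this)
  have hnt : Nontrivial P.ringCon.Quotient := by
    refine ⟨(0 : R), (1 : R), fun he => ?_⟩
    rw [hmemP] at he
    apply hone
    have : -(1 : R) ∈ P := by simpa using he
    simpa using P.neg_mem this
  refine ⟨hnt, ?_⟩
  -- every nonzero element has a right inverse
  have hrinv : ∀ x : P.ringCon.Quotient, x ≠ 0 → ∃ y : P.ringCon.Quotient, x * y = 1 := by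
    intro x hx
    obtain ⟨a, rfl⟩ := Quotient.exists_rep x
    have haP : a ∉ I := by
      rw [← hPI]
      intro haI
      apply hx
      show ((a : R) : P.ringCon.Quotient) = ((0 : R) : P.ringCon.Quotient)
      rw [hmemP]
      simpa using haI
    have hsup : I ⊔ Submodule.span Rᵐᵒᵖ {a} = ⊤ := by
      refine hco.2 _ (lt_of_le_of_ne le_sup_left fun hEq => haP ?_)
      rw [hEq]
      exact Submodule.mem_sup_right (Submodule.mem_span_singleton_self a)
    have h1 : (1 : R) ∈ I ⊔ Submodule.span Rᵐᵒᵖ {a} := hsup ▸ Submodule.mem_top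
    obtain ⟨y, hy, z, hz, hyz⟩ := Submodule.mem_sup.mp h1
    obtain ⟨c, rfl⟩ := Submodule.mem_span_singleton.mp hz
    refine ⟨(c.unop : R), ?_⟩
    have : ((a * c.unop : R) : P.ringCon.Quotient) = ((1 : R) : P.ringCon.Quotient) := by
      rw [hmemP, hPI]
      have hz' : (c • a : R) = a * c.unop := by rw [MulOpposite.smul_eq_mul_unop]
      have : a * c.unop - 1 = -y := by rw [← hz', ← hyz]; abel
      rw [this]
      exact I.neg_mem hy
    exact this
  -- bootstrap to two-sided inverses
  intro x hx
  obtain ⟨y, hxy⟩ := hrinv x hx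
  have hy0 : y ≠ 0 := by
    intro h0
    rw [h0, mul_zero] at hxy
    exact one_ne_zero hxy.symm
  obtain ⟨z, hyz⟩ := hrinv y hy0
  have hxz : x = z := by
    calc x = x * (y * z) := by rw [hyz, mul_one]
    _ = (x * y) * z := by rw [mul_assoc]
    _ = z := by rw [hxy, one_mul]
  exact isUnit_iff_exists.mpr ⟨y, hxy, by rw [hxz]; exact hyz⟩
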